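/- Let K be a locally presentable category, (C, C^□) a cofibrant weak factorization system generated by a set I ⊆ C, (Cyl, γ, σ) a cartesian cylinder for (C, C^□), and S ⊆ C a subset. Then for every object X and every fibrant object T (i.e. one with T → 1 in Λ(Cyl,S,I)^□), the homotopy relation ≃ is an equivalence relation on the hom-set Hom(X,T). -/

import Mathlib

/-!
Common definitions: weak factorization systems, functorial cylinders,
Cisinski's construction, localizers, locally presentable categories.
-/

universe w v u u₁ u₂ u₃

open CategoryTheory Limits Opposite

namespace Paper

variable {K : Type u} [Category.{v} K]

/-- The class of maps with the right lifting property against all maps in `H`. -/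
def Rlp (H : MorphismProperty K) : MorphismProperty K :=
  fun _ _ g => ∀ ⦃A B : K⦄ (h : A ⟶ B), H h → HasLiftingProperty h g

/-- The class of maps with the left lifting property against all maps in `H`. -/
def Llp (H : MorphismProperty K) : MorphismProperty K :=
  fun _ _ f => ∀ ⦃A B : K⦄ (h : A ⟶ B), H h → HasLiftingProperty f h

/-- Weak factorization system. -/
structure IsWFS (L R : MorphismProperty K) : Prop where
  llp_eq : L = Llp R
  rlp_eq : R = Rlp L
  factor : ∀ ⦃X Y : K⦄ (f : X ⟶ Y),
    ∃ (Z : K) (l : X ⟶ Z) (r : Z ⟶ Y), L l ∧ R r ∧ l ≫ r = f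

/-- A class of maps is essentially a (small) set. -/
def IsSmallClass (I : MorphismProperty K) : Prop :=
  Small.{v} (Σ (X : K) (Y : K), { f : X ⟶ Y // I f })

/-- Every object is cofibrant. -/
def AllCofibrant [HasInitial K] (L : MorphismProperty K) : Prop :=
  ∀ X : K, L (initial.to X)

/-- `L` is cofibrantly generated (by a set). -/
def CofGenerated (L : MorphismProperty K) : Prop :=
  ∃ I : MorphismProperty K, IsSmallClass I ∧ L = Llp (Rlp I)

/-- intersection of two classes of maps -/
def interClass (A B : MorphismProperty K) : MorphismProperty K := fun _ _ f => A f ∧ B f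

/-- closed under retracts in the arrow category -/
def RetractClosed (W : MorphismProperty K) : Prop :=
  ∀ ⦃f g : Arrow K⦄ (i : f ⟶ g) (r : g ⟶ f), i ≫ r = 𝟙 f → W g.hom → W f.hom

/-- the 2-out-of-3 property -/
def TwoOutOfThree (W : MorphismProperty K) : Prop :=
  (∀ ⦃X Y Z : K⦄ (f : X ⟶ Y) (g : Y ⟶ Z), W f → W g → W (f ≫ g)) ∧
  (∀ ⦃X Y Z : K⦄ (f : X ⟶ Y) (g : Y ⟶ Z), W f → W (f ≫ g) → W g) ∧
  (∀ ⦃X Y Z : K⦄ (f : X ⟶ Y) (g : Y ⟶ Z), W g → W (f ≫ g) → W f)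

/-- Quillen model structure, given by cofibrations, weak equivalences and fibrations. -/
structure IsModelStructure (Cof W Fib : MorphismProperty K) : Prop where
  retractClosed : RetractClosed W
  twoOutOfThree : TwoOutOfThree W
  wfs₁ : IsWFS Cof (interClass W Fib)
  wfs₂ : IsWFS (interClass Cof W) Fib

/-- the functor `X ↦ X + X` -/
@[simps] noncomputable def double (K : Type u) [Category.{v} K] [HasBinaryCoproducts K] :
    K ⥤ K where
  obj X := X ⨿ X
  map f := coprod.map f f

/-- A functorial cylinder: a functor `C` together with natural transformations
`γ : X + X ⟶ C X` and `σ : C X ⟶ X` factoring the codiagonal. -/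
structure Cylinder (K : Type u) [Category.{v} K] [HasBinaryCoproducts K] where
  C : K ⥤ K
  γ : double K ⟶ C
  σ : C ⟶ 𝟭 K
  fac : ∀ X : K, γ.app X ≫ σ.app X = coprod.desc (𝟙 X) (𝟙 X)

namespace Cylinder
variable [HasBinaryCoproducts K] (cyl : Cylinder K)

/-- `γ⁰` -/
noncomputable def γ₀ : 𝟭 K ⟶ cyl.C where
  app X := coprod.inl ≫ cyl.γ.app X
  naturality X Y f := by
    have h := cyl.γ.naturality f
    dsimp [double] at h ⊢
    rw [Category.assoc, ← h, ← Category.assoc, ← Category.assoc, coprod.inl_map]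

/-- `γ¹` -/
noncomputable def γ₁ : 𝟭 K ⟶ cyl.C where
  app X := coprod.inr ≫ cyl.γ.app X
  naturality X Y f := by
    have h := cyl.γ.naturality f
    dsimp [double] at h ⊢
    rw [Category.assoc, ← h, ← Category.assoc, ← Category.assoc, coprod.inr_map]

/-- `(Cyl, γ, σ)` is a cylinder for a weak factorization system whose left class is `L`
if each `γ_X` lies in `L`. -/
def IsCylinderFor (L : MorphismProperty K) : Prop := ∀ X : K, L (cyl.γ.app X)

/-- the cylinder is final if each `σ_X` lies in `R`. -/
def IsFinal (R : MorphismProperty K) : Prop := ∀ X : K, R (cyl.σ.app X)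

end Cylinder

section Star
variable [HasPushouts K] {F F' : K ⥤ K}

/-- `f ⋆ α`: the induced map from the pushout of `F f` along `α_X` to `F' Y`. -/
noncomputable def starMap (α : F ⟶ F') {X Y : K} (f : X ⟶ Y) :
    pushout (F.map f) (α.app X) ⟶ F'.obj Y :=
  pushout.desc (α.app Y) (F'.map f) (α.naturality f)

/-- the class `L` is stable under `(−) ⋆ α`. -/
def StableUnderStar (L : MorphismProperty K) (α : F ⟶ F') : Prop :=
  ∀ ⦃X Y : K⦄ (f : X ⟶ Y), L f → L (starMap α f)

/-- the class `I ⋆ α = { f ⋆ α | f ∈ I }`. -/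
def starClass (α : F ⟶ F') (I : MorphismProperty K) : MorphismProperty K :=
  fun _ _ g => ∃ (X Y : K) (f : X ⟶ Y), I f ∧ Arrow.mk g = Arrow.mk (starMap α f)

end Star

/-- the cylinder is cartesian with respect to the left class `L`:
the cylinder functor is a left adjoint and `L` is stable under `⋆γ`, `⋆γ⁰` and `⋆γ¹`. -/
structure Cylinder.IsCartesian [HasBinaryCoproducts K] [HasPushouts K]
    (cyl : Cylinder K) (L : MorphismProperty K) : Prop where
  leftAdjoint : cyl.C.IsLeftAdjoint
  star_γ : StableUnderStar L cyl.γ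
  star_γ₀ : StableUnderStar L cyl.γ₀
  star_γ₁ : StableUnderStar L cyl.γ₁

section Lambda
variable [HasBinaryCoproducts K] [HasPushouts K]

/-- `Λⁿ(Cyl,S,I)` -/
noncomputable def LambdaN (cyl : Cylinder K) (S I : MorphismProperty K) :
    ℕ → MorphismProperty K
  | 0 => fun _ _ f => S f ∨ starClass cyl.γ₀ I f ∨ starClass cyl.γ₁ I f
  | n + 1 => starClass cyl.γ (LambdaN cyl S I n)

/-- `Λ(Cyl,S,I)` -/
noncomputable def Lambda (cyl : Cylinder K) (S I : MorphismProperty K) :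
    MorphismProperty K :=
  fun _ _ f => ∃ n : ℕ, LambdaN cyl S I n f

/-- `T` is fibrant if `T → 1` has the right lifting property against `Λ(Cyl,S,I)`. -/
noncomputable def Fibrant [HasTerminal K] (cyl : Cylinder K) (S I : MorphismProperty K)
    (T : K) : Prop :=
  Rlp (Lambda cyl S I) (terminal.from T)

end Lambda

/-- `f` and `g` are homotopic: `(f|g)` factors through `γ_X`. -/
def Htp [HasBinaryCoproducts K] (cyl : Cylinder K) {X Y : K} (f g : X ⟶ Y) : Prop :=
  ∃ h : cyl.C.obj X ⟶ Y, cyl.γ.app X ≫ h = coprod.desc f g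

/-- symmetric-transitive closure of a relation -/
inductive STClos {α : Sort*} (r : α → α → Prop) : α → α → Prop
  | base : ∀ {x y : α}, r x y → STClos r x y
  | symm : ∀ {x y : α}, STClos r x y → STClos r y x
  | trans : ∀ {x y z : α}, STClos r x y → STClos r y z → STClos r x z

/-- the homotopy equivalence relation `∼`, the symmetric-transitive closure of `≃`. -/
def HtpEq [HasBinaryCoproducts K] (cyl : Cylinder K) {X Y : K} : (X ⟶ Y) → (X ⟶ Y) → Prop :=
  STClos (Htp cyl)

/-- `W(Cyl,S,I)`: the maps `f : X ⟶ Y` such that for every fibrant `T` the induced map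
`Hom(Y,T)/∼ → Hom(X,T)/∼` is bijective (expressed elementwise). -/
noncomputable def Weq [HasBinaryCoproducts K] [HasPushouts K] [HasTerminal K]
    (cyl : Cylinder K) (S I : MorphismProperty K) : MorphismProperty K :=
  fun X Y f => ∀ T : K, Fibrant cyl S I T →
    (∀ t : X ⟶ T, ∃ u : Y ⟶ T, HtpEq cyl (f ≫ u) t) ∧
    (∀ u v : Y ⟶ T, HtpEq cyl (f ≫ u) (f ≫ v) → HtpEq cyl u v)

/-- pushout stability of a class of maps -/
def StableUnderPushout (L : MorphismProperty K) : Prop :=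
  ∀ ⦃A B A' B' : K⦄ ⦃f : A ⟶ B⦄ ⦃g : A ⟶ A'⦄ ⦃f' : A' ⟶ B'⦄ ⦃g' : B ⟶ B'⦄,
    IsPushout g f f' g' → L f → L f'

/-- closure under transfinite composition of smooth (colimit preserving) chains -/
def ClosedUnderTransfiniteComposition (L : MorphismProperty K) : Prop :=
  ∀ (o : Ordinal.{v}) (ho : (0 : Ordinal.{v}) < o)
    (D : (Set.Iio o : Set Ordinal.{v}) ⥤ K),
    Nonempty (PreservesColimits D) →
    (∀ (β : Ordinal.{v}) (hβ : β + 1 < o),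
      L (D.map (homOfLE (Subtype.mk_le_mk.mpr (show β ≤ β + 1 by first | exact le_add_right le_rfl | exact le_add_of_nonneg_right (zero_le _) | simp)) :
        (⟨β, lt_of_le_of_lt (show β ≤ β + 1 by first | exact le_add_right le_rfl | exact le_add_of_nonneg_right (zero_le _) | simp) hβ⟩ : (Set.Iio o : Set Ordinal.{v})) ⟶
        ⟨β + 1, hβ⟩))) →
    ∀ (c : Cocone D), IsColimit c → L (c.ι.app ⟨0, ho⟩)

/-- A localizer for the class `Cof`: a class `W` with the 2-out-of-3 property, containing
`Cof^□`, and whose intersection with `Cof` is closed under pushouts and transfinite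
compositions. -/
structure IsLocalizer (Cof W : MorphismProperty K) : Prop where
  twoOutOfThree : TwoOutOfThree W
  rlp_le : ∀ ⦃X Y : K⦄ (f : X ⟶ Y), Rlp Cof f → W f
  pushout : StableUnderPushout (interClass Cof W)
  transfinite : ClosedUnderTransfiniteComposition (interClass Cof W)

/-- `W(S)`: the smallest localizer for `Cof` containing `S` (the intersection of all of them). -/
def smallestLocalizer (Cof S : MorphismProperty K) : MorphismProperty K :=
  fun _ _ f => ∀ W : MorphismProperty K, IsLocalizer Cof W →
    (∀ ⦃A B : K⦄ (s : A ⟶ B), S s → W s) → W f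

/-- the smallest class containing `S` which is a localizer for `Cof` and moreover closed
under retracts in the arrow category. -/
def smallestRetractLocalizer (Cof S : MorphismProperty K) : MorphismProperty K :=
  fun _ _ f => ∀ W : MorphismProperty K, IsLocalizer Cof W → RetractClosed W →
    (∀ ⦃A B : K⦄ (s : A ⟶ B), S s → W s) → W f

/-- the empty class of maps -/
def emptyClass (K : Type u) [Category.{v} K] : MorphismProperty K := fun _ _ _ => False

/-- a preorder is `κ`-directed if every subset of cardinality `< κ` has an upper bound -/
def IsCardinalDirected (κ : Cardinal.{v}) (J : Type v) [Preorder J] : Prop :=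
  ∀ S : Set J, Cardinal.mk S < κ → ∃ j : J, ∀ s ∈ S, s ≤ j

/-- an object `X` is `κ`-presentable if `Hom(X,-)` preserves `κ`-directed colimits -/
def IsPresentableObj (κ : Cardinal.{v}) (X : K) : Prop :=
  ∀ (J : Type v) [Preorder J], IsCardinalDirected κ J →
    Nonempty (PreservesColimitsOfShape J (coyoneda.obj (op X)))

/-- `X` is a `κ`-directed colimit of objects from the set `A` -/
def IsDirectedColimitFrom (κ : Cardinal.{v}) (A : Set K) (X : K) : Prop :=
  ∃ (J : Type v) (pre : Preorder J),
    letI := pre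
    IsCardinalDirected κ J ∧
      ∃ (D : J ⥤ K) (c : Cocone D), Nonempty (IsColimit c) ∧ c.pt = X ∧ ∀ j : J, D.obj j ∈ A

/-- `κ`-accessible category -/
structure IsCardinalAccessible (κ : Cardinal.{v}) (K : Type u) [Category.{v} K] : Prop where
  isRegular : κ.IsRegular
  hasDirectedColimits :
    ∀ (J : Type v) [Preorder J], IsCardinalDirected κ J → HasColimitsOfShape J K
  generators : ∃ A : Set K, Small.{v} A ∧ (∀ X ∈ A, IsPresentableObj κ X) ∧
    ∀ X : K, IsDirectedColimitFrom κ A X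

/-- accessible category -/
def IsAccessibleCat (K : Type u) [Category.{v} K] : Prop :=
  ∃ κ : Cardinal.{v}, IsCardinalAccessible κ K

/-- locally presentable category: accessible and cocomplete -/
def IsLocallyPresentable (K : Type u) [Category.{v} K] : Prop :=
  IsAccessibleCat K ∧ HasColimits K

/-- `F` preserves `κ`-directed colimits -/
def PreservesCardinalDirectedColimits (κ : Cardinal.{v}) {A : Type u₁} [Category.{v} A]
    {C : Type u₂} [Category.{v} C] (F : A ⥤ C) : Prop :=
  ∀ (J : Type v) [Preorder J], IsCardinalDirected κ J →
    Nonempty (PreservesColimitsOfShape J F)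

/-- accessible functor -/
def IsAccessibleFunctor {A : Type u₁} [Category.{v} A] {C : Type u₂} [Category.{v} C]
    (F : A ⥤ C) : Prop :=
  ∃ κ : Cardinal.{v}, IsCardinalAccessible κ A ∧ IsCardinalAccessible κ C ∧
    PreservesCardinalDirectedColimits κ F

/-- dual strong deformation retract -/
def DualStrongDeformationRetract [HasBinaryCoproducts K] (cyl : Cylinder K)
    {X Y : K} (f : X ⟶ Y) : Prop :=
  ∃ (g : Y ⟶ X) (h : cyl.C.obj X ⟶ X),
    g ≫ f = 𝟙 Y ∧ cyl.γ₀.app X ≫ h = 𝟙 X ∧ cyl.γ₁.app X ≫ h = f ≫ g ∧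
      h ≫ f = cyl.σ.app X ≫ f


section Statement15Aux

variable {K : Type u} [Category.{v} K] [HasBinaryCoproducts K] [HasPushouts K]

/-- transpose-evaluation: for `a : A ⟶ R T`, `a ≫ γ₀ ≫ ε = γ₀ ≫ C.map a ≫ ε`. -/
lemma eval_comp₀ (cyl : Cylinder K) {R : K ⥤ K} (adj : cyl.C ⊣ R) {A T : K}
    (a : A ⟶ R.obj T) :
    a ≫ (cyl.γ₀.app (R.obj T) ≫ adj.counit.app T) =
      cyl.γ₀.app A ≫ cyl.C.map a ≫ adj.counit.app T := by
  have h := cyl.γ₀.naturality a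
  dsimp at h
  rw [← Category.assoc, ← Category.assoc, ← h]

lemma eval_comp₁ (cyl : Cylinder K) {R : K ⥤ K} (adj : cyl.C ⊣ R) {A T : K}
    (a : A ⟶ R.obj T) :
    a ≫ (cyl.γ₁.app (R.obj T) ≫ adj.counit.app T) =
      cyl.γ₁.app A ≫ cyl.C.map a ≫ adj.counit.app T := by
  have h := cyl.γ₁.naturality a
  dsimp at h
  rw [← Category.assoc, ← Category.assoc, ← h]

/-- transpose vs counit -/
lemma transpose_eval {C' : Type u₂} {D' : Type u₃} [Category.{v} C'] [Category.{v} D']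
    {F : C' ⥤ D'} {G : D' ⥤ C'}
    (adj : F ⊣ G) {A : C'} {Y : D'} (g : A ⟶ G.obj Y) :
    F.map g ≫ adj.counit.app Y = (adj.homEquiv A Y).symm g :=
  (adj.homEquiv_counit A Y g).symm

/-- If `T → 1` has RLP against `i ⋆ γ₀`, then `i` has LLP against the evaluation
`e : R T ⟶ T`. -/
lemma llp_eval_of_rlp_star [HasTerminal K] (cyl : Cylinder K) {R : K ⥤ K}
    (adj : cyl.C ⊣ R) {A B T : K} (i : A ⟶ B)
    (hlift : HasLiftingProperty (starMap cyl.γ₀ i) (terminal.from T)) :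
    HasLiftingProperty i (cyl.γ₀.app (R.obj T) ≫ adj.counit.app T) := by
  constructor
  intro a b sq
  have w : i ≫ b = cyl.γ₀.app A ≫ cyl.C.map a ≫ adj.counit.app T := by
    rw [← eval_comp₀ cyl adj a, ← sq.w]
  have sq2 : CommSq (pushout.desc b (cyl.C.map a ≫ adj.counit.app T) w)
      (starMap cyl.γ₀ i) (terminal.from T) (terminal.from (cyl.C.obj B)) :=
    ⟨by apply terminal.hom_ext⟩
  obtain ⟨⟨⟨L, hL, -⟩⟩⟩ := hlift.sq_hasLift sq2
  have hinl : (pushout.inl i (cyl.γ₀.app A)) ≫ starMap cyl.γ₀ i = cyl.γ₀.app B := by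
    exact pushout.inl_desc _ _ _
  have hinr : (pushout.inr i (cyl.γ₀.app A)) ≫ starMap cyl.γ₀ i = cyl.C.map i := by
    exact pushout.inr_desc _ _ _
  refine ⟨⟨⟨adj.homEquiv B T L, ?_, ?_⟩⟩⟩
  · -- i ≫ transpose L = a
    have h1 : cyl.C.map i ≫ L = cyl.C.map a ≫ adj.counit.app T := by
      rw [← hinr, Category.assoc, hL]
      exact pushout.inr_desc _ _ _
    have := adj.homEquiv_naturality_left i L
    rw [← this, h1, transpose_eval adj a]
    exact (adj.homEquiv A T).apply_symm_apply a
  · -- transpose L ≫ e = b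
    rw [eval_comp₀ cyl adj, transpose_eval adj, (adj.homEquiv B T).symm_apply_apply L,
      ← hinl, Category.assoc, hL]
    exact pushout.inl_desc _ _ _

end Statement15Aux

/-- Lemma: homotopy is an equivalence relation on maps into fibrant
objects. -/
theorem statement15 {K : Type u} [Category.{v} K]
    [HasInitial K] [HasTerminal K] [HasBinaryCoproducts K] [HasPushouts K]
    (hK : IsLocallyPresentable K)
    (Cof : MorphismProperty K) (hwfs : IsWFS Cof (Rlp Cof))
    (I : MorphismProperty K) (hIset : IsSmallClass I)
    (hIL : ∀ ⦃X Y : K⦄ (f : X ⟶ Y), I f → Cof f) (hgen : Cof = Llp (Rlp I))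
    (hcof : AllCofibrant Cof)
    (cyl : Cylinder K) (hcyl : cyl.IsCylinderFor Cof) (hcart : cyl.IsCartesian Cof)
    (S : MorphismProperty K) (hS : ∀ ⦃X Y : K⦄ (f : X ⟶ Y), S f → Cof f)
    (X T : K) (hT : Fibrant cyl S I T) :
    Equivalence (fun f g : X ⟶ T => Htp cyl f g) := by
  classical
  obtain ⟨R, ⟨adj⟩⟩ := hcart.leftAdjoint.exists_rightAdjoint
  -- the evaluation map e : R T ⟶ T lies in Rlp I
  have hRlp : Rlp I (cyl.γ₀.app (R.obj T) ≫ adj.counit.app T) := by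
    intro A B i hi
    apply llp_eval_of_rlp_star cyl adj i
    apply hT
    exact ⟨0, Or.inr (Or.inl ⟨A, B, i, hi, rfl⟩)⟩
  -- hence every cofibration lifts against e
  have hγlift : HasLiftingProperty (cyl.γ.app X)
      (cyl.γ₀.app (R.obj T) ≫ adj.counit.app T) := by
    have : Llp (Rlp I) (cyl.γ.app X) := hgen ▸ hcyl X
    exact this _ hRlp
  -- reflexivity
  have hrefl : ∀ f : X ⟶ T, Htp cyl f f := by
    intro f
    refine ⟨cyl.σ.app X ≫ f, ?_⟩
    rw [← Category.assoc, cyl.fac]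
    exact (coprod.desc_comp f (𝟙 X) (𝟙 X)).trans (by rw [Category.id_comp])
  -- key step: Htp f g → Htp f f' → Htp g f'
  have key : ∀ f g f' : X ⟶ T, Htp cyl f g → Htp cyl f f' → Htp cyl g f' := by
    intro f g f' ⟨h, hh⟩ ⟨k, hk⟩
    have hh'e : cyl.C.map (adj.homEquiv X T h) ≫ adj.counit.app T = h := by
      rw [transpose_eval adj]; exact (adj.homEquiv X T).symm_apply_apply h
    have hk'e : cyl.C.map (adj.homEquiv X T k) ≫ adj.counit.app T = k := by
      rw [transpose_eval adj]; exact (adj.homEquiv X T).symm_apply_apply k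
    have hf0h : cyl.γ₀.app X ≫ h = f := by
      show (coprod.inl ≫ cyl.γ.app X) ≫ h = f
      exact (Category.assoc _ _ _).trans ((congrArg (fun t => coprod.inl ≫ t) hh).trans (coprod.inl_desc _ _))
    have hf0k : cyl.γ₀.app X ≫ k = f := by
      show (coprod.inl ≫ cyl.γ.app X) ≫ k = f
      exact (Category.assoc _ _ _).trans ((congrArg (fun t => coprod.inl ≫ t) hk).trans (coprod.inl_desc _ _))
    have hg1h : cyl.γ₁.app X ≫ h = g := by
      show (coprod.inr ≫ cyl.γ.app X) ≫ h = g
      exact (Category.assoc _ _ _).trans ((congrArg (fun t => coprod.inr ≫ t) hh).trans (coprod.inr_desc _ _))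
    have hf1k : cyl.γ₁.app X ≫ k = f' := by
      show (coprod.inr ≫ cyl.γ.app X) ≫ k = f'
      exact (Category.assoc _ _ _).trans ((congrArg (fun t => coprod.inr ≫ t) hk).trans (coprod.inr_desc _ _))
    have hγσ : cyl.γ.app X ≫ cyl.σ.app X ≫ f = coprod.desc f f := by
      rw [← Category.assoc, cyl.fac]
      exact (coprod.desc_comp f (𝟙 X) (𝟙 X)).trans (by rw [Category.id_comp])
    have sqw : coprod.desc (adj.homEquiv X T h) (adj.homEquiv X T k) ≫
        (cyl.γ₀.app (R.obj T) ≫ adj.counit.app T) =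
        cyl.γ.app X ≫ (cyl.σ.app X ≫ f) := by
      rw [hγσ]
      apply coprod.hom_ext
      · rw [coprod.inl_desc_assoc, eval_comp₀ cyl adj, hh'e, hf0h, coprod.inl_desc]
      · rw [coprod.inr_desc_assoc, eval_comp₀ cyl adj, hk'e, hf0k, coprod.inr_desc]
    obtain ⟨⟨⟨L, hL, -⟩⟩⟩ := hγlift.sq_hasLift ⟨sqw⟩
    refine ⟨L ≫ cyl.γ₁.app (R.obj T) ≫ adj.counit.app T, ?_⟩
    rw [← Category.assoc, hL]
    show coprod.desc (adj.homEquiv X T h) (adj.homEquiv X T k) ≫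
      (cyl.γ₁.app (R.obj T) ≫ adj.counit.app T) = coprod.desc g f'
    apply coprod.hom_ext
    · rw [coprod.inl_desc_assoc, eval_comp₁ cyl adj, hh'e, hg1h, coprod.inl_desc]
    · rw [coprod.inr_desc_assoc, eval_comp₁ cyl adj, hk'e, hf1k, coprod.inr_desc]
  refine ⟨hrefl, ?_, ?_⟩
  · intro f g hfg
    exact key f g f hfg (hrefl f)
  · intro f g h hfg hgh
    exact key g f h (key f g f hfg (hrefl f)) hgh

end Paper
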